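/- Let Y : ℍ → ℂ be holomorphic on the open upper half-plane ℍ = {w ∈ ℂ : Im w > 0} with Im Y(w) ≥ 0 for all w ∈ ℍ. Then for every a ∈ ℝ and all real numbers 0 < b ≤ η one has |Y(a + ib)| ≤ (η/b) · |Y(a + iη)|. -/

import Mathlib

open Metric Set

/-- Cayley-type fact: if `w` and `p` are in the open upper half-plane, then
`|w - p| < |w - conj p|`. -/
lemma cayley_lt {w p : ℂ} (hw : 0 < w.im) (hp : 0 < p.im) :
    ‖w - p‖ < ‖w - (starRingEnd ℂ) p‖ := by
  have hsq : Complex.normSq (w - (starRingEnd ℂ) p) - Complex.normSq (w - p)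
      = 4 * w.im * p.im := by
    simp [Complex.normSq_apply, Complex.sub_re, Complex.sub_im, Complex.conj_re,
      Complex.conj_im]
    ring
  have h2 : (‖w - p‖) ^ 2 < (‖w - (starRingEnd ℂ) p‖) ^ 2 := by
    rw [Complex.sq_norm, Complex.sq_norm]
    nlinarith
  exact lt_of_pow_lt_pow_left₀ 2 (norm_nonneg _) h2

/-- The key ε-regularized inequality via the Schwarz lemma. -/
lemma key_eps
    (Y : ℂ → ℂ)
    (hol : DifferentiableOn ℂ Y {w : ℂ | 0 < w.im})
    (him : ∀ w : ℂ, 0 < w.im → 0 ≤ (Y w).im)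
    (a b η : ℝ) (hb : 0 < b) (hbη : b ≤ η) (ε : ℝ) (hε : 0 < ε) :
    ‖Y ((a : ℂ) + b * Complex.I) + ε * Complex.I‖
      ≤ (η / b) * ‖Y ((a : ℂ) + η * Complex.I) + ε * Complex.I‖ := by
  have hη : 0 < η := hb.trans_le hbη
  have hopen : IsOpen {w : ℂ | 0 < w.im} := isOpen_lt continuous_const Complex.continuous_im
  set w0 : ℂ := (a : ℂ) + η * Complex.I with hw0
  have hw0im : 0 < w0.im := by simp [hw0, hη]
  set p : ℂ := Y w0 + ε * Complex.I with hpdef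
  have hpim : 0 < p.im := by
    have := him w0 hw0im
    simp only [hpdef, Complex.add_im, Complex.mul_im, Complex.ofReal_re, Complex.ofReal_im,
      Complex.I_im, Complex.I_re]
    nlinarith
  -- the Möbius map from the unit disk to the upper half-plane sending 0 to w0
  set ψ : ℂ → ℂ := fun z => (w0 - (starRingEnd ℂ) w0 * z) / (1 - z) with hψdef
  have hψden : ∀ z ∈ ball (0 : ℂ) 1, (1 : ℂ) - z ≠ 0 := by
    intro z hz
    rw [mem_ball_zero_iff] at hz
    intro h
    have : z = 1 := by linear_combination -h
    simp [this] at hz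
  have hψim : ∀ z ∈ ball (0 : ℂ) 1, 0 < (ψ z).im := by
    intro z hz
    have hz' := mem_ball_zero_iff.mp hz
    have hz'' : ‖z‖ < 1 := by exact hz'
    have hzsq : z.re ^ 2 + z.im ^ 2 < 1 := by
      have : Complex.normSq z < 1 := by
        have := Complex.sq_norm z
        nlinarith [norm_nonneg z]
      simpa [Complex.normSq_apply, sq] using this
    have hden := hψden z hz
    have hnsq : 0 < Complex.normSq (1 - z) := Complex.normSq_pos.mpr hden
    rw [hψdef]
    simp only [Complex.div_im]
    rw [div_sub_div_same, lt_div_iff₀ hnsq]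
    have : ((w0 - (starRingEnd ℂ) w0 * z).im * (1 - z).re
        - (w0 - (starRingEnd ℂ) w0 * z).re * (1 - z).im)
        = η * (1 - (z.re ^ 2 + z.im ^ 2)) := by
      simp [hw0, Complex.sub_re, Complex.sub_im, Complex.mul_re, Complex.mul_im,
        Complex.conj_re, Complex.conj_im, Complex.add_re, Complex.add_im,
        Complex.ofReal_re, Complex.ofReal_im, Complex.I_re, Complex.I_im,
        Complex.one_re, Complex.one_im]
      ring
    rw [this]
    nlinarith
  have hψ0 : ψ 0 = w0 := by simp [hψdef]
  -- the composed map 𝔻 → 𝔻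
  set H : ℂ → ℂ := fun z =>
    (Y (ψ z) + ε * Complex.I - p) / (Y (ψ z) + ε * Complex.I - (starRingEnd ℂ) p) with hHdef
  have hFim : ∀ z ∈ ball (0 : ℂ) 1, 0 < (Y (ψ z) + ε * Complex.I).im := by
    intro z hz
    have := him (ψ z) (hψim z hz)
    simp only [Complex.add_im, Complex.mul_im, Complex.ofReal_re, Complex.ofReal_im,
      Complex.I_im, Complex.I_re]
    nlinarith
  have hHden : ∀ z ∈ ball (0 : ℂ) 1,
      Y (ψ z) + ε * Complex.I - (starRingEnd ℂ) p ≠ 0 := by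
    intro z hz h
    have h1 : (Y (ψ z) + ε * Complex.I - (starRingEnd ℂ) p).im
        = (Y (ψ z) + ε * Complex.I).im + p.im := by
      simp [Complex.sub_im, Complex.conj_im]
    rw [h] at h1
    simp only [Complex.zero_im, Complex.add_im] at h1
    have h3 := him (ψ z) (hψim z hz)
    have h4 : (0:ℝ) < ((ε:ℂ) * Complex.I).im := by simp [hε]
    linarith
  have hHd : DifferentiableOn ℂ H (ball (0 : ℂ) 1) := by
    intro z hz
    apply DifferentiableAt.differentiableWithinAt
    have hψd : DifferentiableAt ℂ ψ z := by
      apply DifferentiableAt.div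
      · exact (differentiableAt_const _).sub ((differentiableAt_const _).mul differentiableAt_id)
      · exact (differentiableAt_const _).sub differentiableAt_id
      · exact hψden z hz
    have hYd : DifferentiableAt ℂ Y (ψ z) :=
      hol.differentiableAt (hopen.mem_nhds (hψim z hz))
    have hG : DifferentiableAt ℂ (fun z => Y (ψ z) + ε * Complex.I) z :=
      (hYd.comp z hψd).add_const _
    exact (hG.sub_const _).div (hG.sub_const _) (hHden z hz)
  have hH0 : H 0 = 0 := by simp [hHdef, hψ0, hpdef]
  have hHmaps : MapsTo H (ball (0 : ℂ) 1) (ball (0 : ℂ) 1) := by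
    intro z hz
    rw [mem_ball_zero_iff]
    have hlt := cayley_lt (hFim z hz) hpim
    have hpos : 0 < ‖Y (ψ z) + ε * Complex.I - (starRingEnd ℂ) p‖ :=
      (norm_nonneg _).trans_lt hlt
    rw [hHdef]
    simp only [norm_div]
    rw [div_lt_one hpos]
    exact hlt
  -- apply the Schwarz lemma at t = (b - η)/(b + η)
  set t : ℝ := (b - η) / (b + η) with ht
  have hbη' : 0 < b + η := by linarith
  have htnp : t ≤ 0 := div_nonpos_of_nonpos_of_nonneg (by linarith) (by linarith)
  have htabs : |t| = (η - b) / (b + η) := by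
    rw [abs_of_nonpos htnp, ht]; ring
  have htlt : ‖(t : ℂ)‖ < 1 := by
    rw [Complex.norm_real, Real.norm_eq_abs, htabs, div_lt_one hbη']
    linarith
  have hψt : ψ (t : ℂ) = (a : ℂ) + b * Complex.I := by
    have hden : (1 : ℂ) - (t : ℂ) ≠ 0 :=
      hψden _ (mem_ball_zero_iff.mpr htlt)
    rw [hψdef]
    simp only
    rw [div_eq_iff hden, ht, hw0]
    have hc : ((b : ℂ) + η) ≠ 0 := by
      intro h
      have : ((b + η : ℝ) : ℂ) = 0 := by push_cast; linear_combination h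
      exact hbη'.ne' (by exact_mod_cast this)
    push_cast
    rw [map_add, map_mul, Complex.conj_ofReal, Complex.conj_ofReal, Complex.conj_I]
    field_simp
    ring
  have hSch := Complex.norm_le_norm_of_mapsTo_ball hHd (hHmaps.mono_right ball_subset_closedBall) hH0 htlt
  set q : ℂ := Y ((a : ℂ) + b * Complex.I) + ε * Complex.I with hq
  have hHt : H (t : ℂ) = (q - p) / (q - (starRingEnd ℂ) p) := by
    rw [hHdef]; simp only [hψt, hq]
  have hqden : q - (starRingEnd ℂ) p ≠ 0 := by
    have := hHden (t : ℂ) (mem_ball_zero_iff.mpr htlt)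
    rwa [hψt, ← hq] at this
  have hqdenpos : 0 < ‖q - (starRingEnd ℂ) p‖ :=
    norm_pos_iff.mpr hqden
  rw [hHt, Complex.norm_real, Real.norm_eq_abs, htabs] at hSch
  have hkey : ‖q - p‖
      ≤ (η - b) / (b + η) * ‖q - (starRingEnd ℂ) p‖ := by
    rw [norm_div] at hSch
    rw [← div_le_iff₀ hqdenpos] at *
    exact hSch
  -- triangle inequalities
  have h1 : ‖q‖ - ‖p‖ ≤ ‖q - p‖ := by
    have := norm_sub_norm_le q p
    exact this
  have h2 : ‖q - (starRingEnd ℂ) p‖ ≤ ‖q‖ + ‖p‖ := by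
    calc ‖q - (starRingEnd ℂ) p‖
        ≤ ‖q‖ + ‖(starRingEnd ℂ) p‖ := by
          exact norm_sub_le q ((starRingEnd ℂ) p)
      _ = ‖q‖ + ‖p‖ := by rw [Complex.norm_conj]
  have hmul : (b + η) * ‖q - p‖
      ≤ (η - b) * ‖q - (starRingEnd ℂ) p‖ := by
    have := mul_le_mul_of_nonneg_left hkey hbη'.le
    calc (b + η) * ‖q - p‖
        ≤ (b + η) * ((η - b) / (b + η) * ‖q - (starRingEnd ℂ) p‖) := this
      _ = (η - b) * ‖q - (starRingEnd ℂ) p‖ := by field_simp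
  have hq0 : 0 ≤ ‖q‖ := norm_nonneg q
  have hp0 : 0 ≤ ‖p‖ := norm_nonneg p
  rw [hq, hpdef] at *
  rw [div_mul_eq_mul_div, le_div_iff₀ hb]
  nlinarith [mul_le_mul_of_nonneg_left h2 (show (0:ℝ) ≤ η - b by linarith)]

/-- If `Y` is holomorphic on the open upper half-plane with
`Im Y ≥ 0` there, then for `0 < b ≤ η` one has
`|Y(a + ib)| ≤ (η/b) · |Y(a + iη)|`. -/
theorem stmt_2
    (Y : ℂ → ℂ)
    (hol : DifferentiableOn ℂ Y {w : ℂ | 0 < w.im})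
    (him : ∀ w : ℂ, 0 < w.im → 0 ≤ (Y w).im)
    (a b η : ℝ) (hb : 0 < b) (hbη : b ≤ η) :
    ‖Y ((a : ℂ) + b * Complex.I)‖
      ≤ (η / b) * ‖Y ((a : ℂ) + η * Complex.I)‖ := by
  have hη : 0 < η := hb.trans_le hbη
  have hC : 0 < η / b + 1 := by positivity
  apply le_of_forall_pos_le_add
  intro δ hδ
  set ε : ℝ := δ / (η / b + 1) with hε
  have hεpos : 0 < ε := by positivity
  have hk := key_eps Y hol him a b η hb hbη ε hεpos
  set q := Y ((a : ℂ) + b * Complex.I)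
  set p := Y ((a : ℂ) + η * Complex.I)
  have hεI : ‖(ε : ℂ) * Complex.I‖ = ε := by
    simp [abs_of_pos hεpos]
  have h1 : ‖q‖ ≤ ‖q + ε * Complex.I‖ + ε := by
    have h := norm_sub_le (q + (ε : ℂ) * Complex.I) ((ε : ℂ) * Complex.I)
    simp only [add_sub_cancel_right] at h
    rw [hεI] at h
    linarith
  have h2 : ‖p + ε * Complex.I‖ ≤ ‖p‖ + ε := by
    have h := norm_add_le p ((ε : ℂ) * Complex.I)
    rw [hεI] at h
    linarith
  have hd : (η / b) * ε + ε = δ := by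
    rw [hε]; field_simp
  have hηb : 0 ≤ η / b := by positivity
  calc ‖q‖ ≤ ‖q + ε * Complex.I‖ + ε := h1
    _ ≤ (η / b) * ‖p + ε * Complex.I‖ + ε := by linarith
    _ ≤ (η / b) * (‖p‖ + ε) + ε := by nlinarith
    _ = (η / b) * ‖p‖ + δ := by rw [← hd]; ring
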